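/- Let n ≥ 2 and let (α_σ)_{σ ∈ S_n} be scalars in a field k of characteristic 0. If ∑_{σ ∈ S_n} α_σ Q_n(λ_{σ(1)},...,λ_{σ(n)}) = 0 for all positive integers λ_1,...,λ_n, then ∑_{δ ∈ S_{n-1}} α_δ Q_{n-1}(λ_{δ(1)},...,λ_{δ(n-1)}) = 0 for all positive integers λ_1,...,λ_{n-1}, where each δ ∈ S_{n-1} is identified with the σ ∈ S_n fixing n, and Q_m(μ_1,...,μ_m) = 1/∏_{j=2}^{m}(μ_j + ... + μ_m). -/

import Mathlib

/-- `Qfin μ = 1 / ∏_{j=2}^{n} (μ_j + μ_{j+1} + ... + μ_n)` (0-indexed: `j ≠ 0`). -/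
def Qfin {k : Type*} [Field k] {n : ℕ} (μ : Fin n → k) : k :=
  (∏ j ∈ Finset.univ.filter (fun j : Fin n => (j : ℕ) ≠ 0),
    ∑ t ∈ Finset.univ.filter (fun t : Fin n => j ≤ t), μ t)⁻¹

namespace Stmt6

open Finset Polynomial

/-- μ with the last coordinate replaced by 0. -/
def wg (m : ℕ) (μ : Fin (m+1) → ℕ) (i : Fin (m+1)) : ℕ := if i = Fin.last m then 0 else μ i

/-- indicator of the last coordinate. -/
def vg (m : ℕ) (i : Fin (m+1)) : ℕ := if i = Fin.last m then 1 else 0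

def JJ (m : ℕ) : Finset (Fin (m+1)) := Finset.univ.filter (fun j => (j : ℕ) ≠ 0)

def aa (m : ℕ) (μ : Fin (m+1) → ℕ) (σ : Equiv.Perm (Fin (m+1))) (j : Fin (m+1)) : ℕ :=
  ∑ t ∈ Finset.univ.filter (fun t => j ≤ t), wg m μ (σ t)

def bbq (m : ℕ) (σ : Equiv.Perm (Fin (m+1))) (j : Fin (m+1)) : ℕ :=
  ∑ t ∈ Finset.univ.filter (fun t => j ≤ t), vg m (σ t)

lemma lam_pos (m : ℕ) (μ : Fin (m+1) → ℕ) (hμ : ∀ i, 0 < μ i) (N : ℕ) (hN : 1 ≤ N)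
    (i : Fin (m+1)) : 0 < N * wg m μ i + vg m i := by
  unfold wg vg
  split_ifs with hi
  · omega
  · have := hμ i; positivity

lemma sum_lam (m : ℕ) (μ : Fin (m+1) → ℕ) (σ : Equiv.Perm (Fin (m+1))) (N : ℕ)
    (j : Fin (m+1)) :
    ∑ t ∈ Finset.univ.filter (fun t => j ≤ t), (N * wg m μ (σ t) + vg m (σ t))
      = N * aa m μ σ j + bbq m σ j := by
  rw [Finset.sum_add_distrib, aa, bbq, Finset.mul_sum]

lemma factor_pos (m : ℕ) (μ : Fin (m+1) → ℕ) (hμ : ∀ i, 0 < μ i)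
    (σ : Equiv.Perm (Fin (m+1))) (N : ℕ) (hN : 1 ≤ N) (j : Fin (m+1)) :
    0 < N * aa m μ σ j + bbq m σ j := by
  rw [← sum_lam]
  have hmem : Fin.last m ∈ Finset.univ.filter (fun t => j ≤ t) := by
    simp [Fin.le_last]
  calc 0 < N * wg m μ (σ (Fin.last m)) + vg m (σ (Fin.last m)) :=
        lam_pos m μ hμ N hN _
    _ ≤ _ := Finset.single_le_sum (f := fun t => N * wg m μ (σ t) + vg m (σ t)) (fun t _ => Nat.zero_le _) hmem

lemma aa_eq_zero_iff (m : ℕ) (μ : Fin (m+1) → ℕ) (hμ : ∀ i, 0 < μ i)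
    (σ : Equiv.Perm (Fin (m+1))) (j : Fin (m+1)) :
    aa m μ σ j = 0 ↔ j = Fin.last m ∧ σ (Fin.last m) = Fin.last m := by
  rw [aa, Finset.sum_eq_zero_iff]
  have hwz : ∀ t : Fin (m+1), wg m μ (σ t) = 0 ↔ σ t = Fin.last m := by
    intro t
    unfold wg
    split_ifs with ht
    · simp [ht]
    · simp [ht, (hμ (σ t)).ne']
  constructor
  · intro H
    have hlast : σ (Fin.last m) = Fin.last m := by
      rw [← hwz]
      exact H _ (by simp [Fin.le_last])
    have hj : σ j = Fin.last m := by
      rw [← hwz]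
      exact H _ (by simp)
    have : j = Fin.last m := σ.injective (by rw [hj, hlast])
    exact ⟨this, hlast⟩
  · rintro ⟨rfl, hfix⟩ t ht
    simp only [Finset.mem_filter] at ht
    have : t = Fin.last m := le_antisymm (Fin.le_last t) ht.2
    rw [this, hwz]
    exact hfix

lemma bbq_last (m : ℕ) (σ : Equiv.Perm (Fin (m+1))) (hfix : σ (Fin.last m) = Fin.last m) :
    bbq m σ (Fin.last m) = 1 := by
  have hset : Finset.univ.filter (fun t : Fin (m+1) => Fin.last m ≤ t) = {Fin.last m} := by
    ext t
    simp only [Finset.mem_filter, Finset.mem_univ, true_and, Finset.mem_singleton]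
    exact ⟨fun h => le_antisymm (Fin.le_last t) h, fun h => h ▸ le_rfl⟩
  rw [bbq, hset, Finset.sum_singleton, hfix, vg, if_pos rfl]

noncomputable def AP (k : Type*) [Field k] (m : ℕ) (μ : Fin (m+1) → ℕ)
    (σ : Equiv.Perm (Fin (m+1))) : Polynomial k :=
  ∏ j ∈ (JJ m).filter (fun j => aa m μ σ j ≠ 0),
    (Polynomial.C (aa m μ σ j : k) + Polynomial.C (bbq m σ j : k) * Polynomial.X)

noncomputable def GP (k : Type*) [Field k] (m : ℕ) (α : Equiv.Perm (Fin (m+1)) → k)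
    (μ : Fin (m+1) → ℕ) : Polynomial k :=
  ∑ σ : Equiv.Perm (Fin (m+1)),
    Polynomial.C (α σ) *
      Polynomial.X ^ (if σ (Fin.last m) = Fin.last m then 0 else 1) *
      ∏ τ ∈ Finset.univ.erase σ, AP k m μ τ

lemma eval_AP (k : Type*) [Field k] (m : ℕ) (μ : Fin (m+1) → ℕ)
    (σ : Equiv.Perm (Fin (m+1))) (y : k) :
    (AP k m μ σ).eval y
      = ∏ j ∈ (JJ m).filter (fun j => aa m μ σ j ≠ 0),
          ((aa m μ σ j : k) + (bbq m σ j : k) * y) := by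
  simp [AP, Polynomial.eval_prod]

lemma filter_aa_zero (m : ℕ) (hm : 1 ≤ m) (μ : Fin (m+1) → ℕ) (hμ : ∀ i, 0 < μ i)
    (σ : Equiv.Perm (Fin (m+1))) :
    (JJ m).filter (fun j => aa m μ σ j = 0)
      = if σ (Fin.last m) = Fin.last m then {Fin.last m} else ∅ := by
  split_ifs with hfix
  · ext j
    simp only [JJ, Finset.mem_filter, Finset.filter_filter, Finset.mem_univ, true_and,
      aa_eq_zero_iff m μ hμ, hfix, and_true, Finset.mem_singleton]
    constructor
    · rintro ⟨-, hj⟩; exact hj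
    · rintro rfl
      refine ⟨?_, rfl⟩
      simp only [Fin.val_last]
      omega
  · ext j
    simp only [JJ, Finset.mem_filter, Finset.filter_filter, Finset.mem_univ, true_and,
      aa_eq_zero_iff m μ hμ, hfix, and_false, Finset.notMem_empty, iff_false]

lemma prodJJ (k : Type*) [Field k] (m : ℕ) (hm : 1 ≤ m) (μ : Fin (m+1) → ℕ)
    (hμ : ∀ i, 0 < μ i) (σ : Equiv.Perm (Fin (m+1))) (y : k) :
    ∏ j ∈ JJ m, ((aa m μ σ j : k) + (bbq m σ j : k) * y)
      = y ^ (if σ (Fin.last m) = Fin.last m then 1 else 0) * (AP k m μ σ).eval y := by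
  rw [eval_AP, ← Finset.prod_filter_mul_prod_filter_not (JJ m) (fun j => aa m μ σ j = 0),
    filter_aa_zero m hm μ hμ σ]
  split_ifs with hfix
  · rw [Finset.prod_singleton]
    have h1 : aa m μ σ (Fin.last m) = 0 := (aa_eq_zero_iff m μ hμ σ _).mpr ⟨rfl, hfix⟩
    rw [h1, bbq_last m σ hfix]
    push_cast
    ring
  · simp

lemma Qfin_eval (k : Type*) [Field k] (m : ℕ) (μ : Fin (m+1) → ℕ)
    (σ : Equiv.Perm (Fin (m+1))) (N : ℕ) :
    Qfin (fun i => ((N * wg m μ (σ i) + vg m (σ i) : ℕ) : k))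
      = (∏ j ∈ JJ m, ((N * aa m μ σ j + bbq m σ j : ℕ) : k))⁻¹ := by
  unfold Qfin JJ
  congr 1
  refine Finset.prod_congr rfl fun j _ => ?_
  rw [← Nat.cast_sum]
  exact congrArg _ (sum_lam m μ σ N j)

lemma GP_eval_invN (k : Type*) [Field k] [CharZero k] (m : ℕ) (hm : 1 ≤ m)
    (α : Equiv.Perm (Fin (m + 1)) → k)
    (h : ∀ μ : Fin (m + 1) → ℕ, (∀ i, 0 < μ i) →
      ∑ σ : Equiv.Perm (Fin (m + 1)), α σ * Qfin (fun i => (μ (σ i) : k)) = 0)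
    (μ : Fin (m+1) → ℕ) (hμ : ∀ i, 0 < μ i) (N : ℕ) (hN : 1 ≤ N) :
    (GP k m α μ).eval ((N : k)⁻¹) = 0 := by
  have hNk : (N : k) ≠ 0 := Nat.cast_ne_zero.mpr (by omega)
  set y : k := (N : k)⁻¹ with hy
  have hy0 : y ≠ 0 := inv_ne_zero hNk
  set c := (JJ m).card with hc
  have hD : ∀ σ : Equiv.Perm (Fin (m+1)),
      (∏ j ∈ JJ m, ((N * aa m μ σ j + bbq m σ j : ℕ) : k)) ≠ 0 := by
    intro σ
    refine Finset.prod_ne_zero_iff.mpr fun j _ => ?_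
    exact Nat.cast_ne_zero.mpr (factor_pos m μ hμ σ N hN j).ne'
  have hsum : ∑ σ : Equiv.Perm (Fin (m+1)),
      α σ * (∏ j ∈ JJ m, ((N * aa m μ σ j + bbq m σ j : ℕ) : k))⁻¹ = 0 := by
    have h0 := h (fun i => N * wg m μ i + vg m i) (fun i => lam_pos m μ hμ N hN i)
    rw [← h0]
    refine Finset.sum_congr rfl fun σ _ => ?_
    rw [Qfin_eval k m μ σ N]
  have hfac : ∀ (σ : Equiv.Perm (Fin (m+1))) (j : Fin (m+1)),
      ((aa m μ σ j : k) + (bbq m σ j : k) * y)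
        = y * ((N * aa m μ σ j + bbq m σ j : ℕ) : k) := by
    intro σ j
    push_cast
    rw [hy]
    field_simp
  have hstar : ∀ σ : Equiv.Perm (Fin (m+1)),
      y ^ (if σ (Fin.last m) = Fin.last m then 1 else 0) * (AP k m μ σ).eval y
        = y ^ c * ∏ j ∈ JJ m, ((N * aa m μ σ j + bbq m σ j : ℕ) : k) := by
    intro σ
    rw [← prodJJ k m hm μ hμ σ y, Finset.prod_congr rfl (fun j _ => hfac σ j),
      Finset.prod_mul_distrib, Finset.prod_const]
  have key : ∀ σ : Equiv.Perm (Fin (m+1)),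
      y ^ (if σ (Fin.last m) = Fin.last m then 0 else 1) * y ^ c *
        (∏ j ∈ JJ m, ((N * aa m μ σ j + bbq m σ j : ℕ) : k))
        = y * (AP k m μ σ).eval y := by
    intro σ
    have hs := hstar σ
    by_cases hfix : σ (Fin.last m) = Fin.last m
    · rw [if_pos hfix] at hs ⊢
      linear_combination -hs
    · rw [if_neg hfix] at hs ⊢
      linear_combination -y * hs
  have hGev : (GP k m α μ).eval y
      = ∑ σ : Equiv.Perm (Fin (m+1)),
          α σ * y ^ (if σ (Fin.last m) = Fin.last m then 0 else 1) *
            ∏ τ ∈ Finset.univ.erase σ, (AP k m μ τ).eval y := by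
    simp only [GP, Polynomial.eval_finset_sum, Polynomial.eval_mul, Polynomial.eval_pow,
      Polynomial.eval_C, Polynomial.eval_X, Polynomial.eval_prod]
  have main : (GP k m α μ).eval y * y ^ c = 0 := by
    calc (GP k m α μ).eval y * y ^ c
        = ∑ σ : Equiv.Perm (Fin (m+1)),
            (α σ * (∏ j ∈ JJ m, ((N * aa m μ σ j + bbq m σ j : ℕ) : k))⁻¹) *
              (y * ∏ τ : Equiv.Perm (Fin (m+1)), (AP k m μ τ).eval y) := by
          rw [hGev, Finset.sum_mul]
          refine Finset.sum_congr rfl fun σ _ => ?_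
          rw [← Finset.mul_prod_erase Finset.univ _ (Finset.mem_univ σ)]
          have hk := key σ
          have hcan : (∏ j ∈ JJ m, ((N * aa m μ σ j + bbq m σ j : ℕ) : k))⁻¹ *
              (∏ j ∈ JJ m, ((N * aa m μ σ j + bbq m σ j : ℕ) : k)) = 1 :=
            inv_mul_cancel₀ (hD σ)
          by_cases hfix : σ (Fin.last m) = Fin.last m
          · rw [if_pos hfix] at hk ⊢
            linear_combination (α σ * (∏ τ ∈ Finset.univ.erase σ, (AP k m μ τ).eval y) *
                (∏ j ∈ JJ m, ((N * aa m μ σ j + bbq m σ j : ℕ) : k))⁻¹) * hk -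
              (α σ * y ^ 0 * (∏ τ ∈ Finset.univ.erase σ, (AP k m μ τ).eval y) * y ^ c) * hcan
          · rw [if_neg hfix] at hk ⊢
            linear_combination (α σ * (∏ τ ∈ Finset.univ.erase σ, (AP k m μ τ).eval y) *
                (∏ j ∈ JJ m, ((N * aa m μ σ j + bbq m σ j : ℕ) : k))⁻¹) * hk -
              (α σ * y ^ 1 * (∏ τ ∈ Finset.univ.erase σ, (AP k m μ τ).eval y) * y ^ c) * hcan
      _ = (∑ σ : Equiv.Perm (Fin (m+1)),
            α σ * (∏ j ∈ JJ m, ((N * aa m μ σ j + bbq m σ j : ℕ) : k))⁻¹) *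
              (y * ∏ τ : Equiv.Perm (Fin (m+1)), (AP k m μ τ).eval y) := by
          rw [← Finset.sum_mul]
      _ = 0 := by rw [hsum, zero_mul]
  rcases mul_eq_zero.mp main with h1 | h2
  · exact h1
  · exact absurd h2 (pow_ne_zero c hy0)

lemma GP_zero (k : Type*) [Field k] [CharZero k] (m : ℕ) (hm : 1 ≤ m)
    (α : Equiv.Perm (Fin (m + 1)) → k)
    (h : ∀ μ : Fin (m + 1) → ℕ, (∀ i, 0 < μ i) →
      ∑ σ : Equiv.Perm (Fin (m + 1)), α σ * Qfin (fun i => (μ (σ i) : k)) = 0)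
    (μ : Fin (m+1) → ℕ) (hμ : ∀ i, 0 < μ i) :
    GP k m α μ = 0 := by
  refine Polynomial.eq_zero_of_infinite_isRoot _ ?_
  apply Set.infinite_of_injective_forall_mem
    (f := fun N : ℕ => (((N + 1 : ℕ) : k))⁻¹)
  · intro p q hpq
    have h1 : ((p + 1 : ℕ) : k) = ((q + 1 : ℕ) : k) := inv_injective hpq
    have := Nat.cast_injective h1
    omega
  · intro N
    exact GP_eval_invN k m hm α h μ hμ (N + 1) (by omega)

lemma eval_AP_zero (k : Type*) [Field k] (m : ℕ) (μ : Fin (m+1) → ℕ)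
    (σ : Equiv.Perm (Fin (m+1))) :
    (AP k m μ σ).eval 0
      = ∏ j ∈ (JJ m).filter (fun j => aa m μ σ j ≠ 0), (aa m μ σ j : k) := by
  rw [eval_AP]
  refine Finset.prod_congr rfl fun j _ => ?_
  ring

lemma eval_AP_zero_ne (k : Type*) [Field k] [CharZero k] (m : ℕ) (μ : Fin (m+1) → ℕ)
    (σ : Equiv.Perm (Fin (m+1))) :
    (AP k m μ σ).eval 0 ≠ 0 := by
  rw [eval_AP_zero]
  refine Finset.prod_ne_zero_iff.mpr fun j hj => ?_
  rw [Finset.mem_filter] at hj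
  exact Nat.cast_ne_zero.mpr hj.2

lemma Qfin_AP (k : Type*) [Field k] (m : ℕ) (hm : 1 ≤ m) (μ : Fin (m+1) → ℕ)
    (hμ : ∀ i, 0 < μ i) (σ : Equiv.Perm (Fin (m+1)))
    (hfix : σ (Fin.last m) = Fin.last m) :
    Qfin (fun i : Fin m => (μ (σ i.castSucc) : k)) = ((AP k m μ σ).eval 0)⁻¹ := by
  have hσne : ∀ t : Fin m, σ t.castSucc ≠ Fin.last m := by
    intro t hc
    have := σ.injective (hc.trans hfix.symm)
    exact absurd this (Fin.castSucc_lt_last t).ne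
  have haacs : ∀ j : Fin m, aa m μ σ (Fin.castSucc j)
      = ∑ t ∈ Finset.univ.filter (fun t : Fin m => j ≤ t), μ (σ t.castSucc) := by
    intro j
    have hsetT : Finset.univ.filter (fun t : Fin (m+1) => Fin.castSucc j ≤ t)
        = insert (Fin.last m)
            ((Finset.univ.filter (fun t : Fin m => j ≤ t)).image Fin.castSucc) := by
      ext t
      simp only [Finset.mem_filter, Finset.mem_univ, true_and, Finset.mem_insert,
        Finset.mem_image]
      constructor
      · intro hle
        by_cases ht : t = Fin.last m
        · exact Or.inl ht
        · refine Or.inr ⟨⟨t.val, Fin.val_lt_last ht⟩, ?_, Fin.ext rfl⟩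
          exact hle
      · rintro (rfl | ⟨t', ht', rfl⟩)
        · exact Fin.le_last _
        · exact Fin.castSucc_le_castSucc_iff.mpr ht'
    have hnotmem : Fin.last m ∉
        (Finset.univ.filter (fun t : Fin m => j ≤ t)).image Fin.castSucc := by
      simp only [Finset.mem_image, not_exists]
      rintro t' ⟨-, hc⟩
      exact absurd hc (Fin.castSucc_lt_last t').ne
    rw [aa, hsetT, Finset.sum_insert hnotmem,
      Finset.sum_image (fun x _ y _ hxy => Fin.castSucc_injective m hxy)]
    have hw0 : wg m μ (σ (Fin.last m)) = 0 := by rw [hfix, wg, if_pos rfl]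
    rw [hw0, zero_add]
    refine Finset.sum_congr rfl fun t _ => ?_
    rw [wg, if_neg (hσne t)]
  have hset : (JJ m).filter (fun j => aa m μ σ j ≠ 0)
      = (Finset.univ.filter (fun j : Fin m => (j : ℕ) ≠ 0)).image Fin.castSucc := by
    ext j
    simp only [JJ, Finset.mem_filter, Finset.filter_filter, Finset.mem_univ, true_and,
      Finset.mem_image]
    constructor
    · rintro ⟨hj0, hjl⟩
      have hjl' : j ≠ Fin.last m := fun hc => hjl ((aa_eq_zero_iff m μ hμ σ j).mpr ⟨hc, hfix⟩)
      exact ⟨⟨j.val, Fin.val_lt_last hjl'⟩, hj0, Fin.ext rfl⟩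
    · rintro ⟨j', hj', rfl⟩
      refine ⟨hj', fun hc => ?_⟩
      have := ((aa_eq_zero_iff m μ hμ σ _).mp hc).1
      exact absurd this (Fin.castSucc_lt_last j').ne
  rw [eval_AP_zero, hset,
    Finset.prod_image (fun x _ y _ hxy => Fin.castSucc_injective m hxy)]
  unfold Qfin
  congr 1
  refine Finset.prod_congr rfl fun j _ => ?_
  rw [haacs, Nat.cast_sum]

end Stmt6

theorem stmt6 (k : Type*) [Field k] [CharZero k] (m : ℕ) (hm : 1 ≤ m)
    (α : Equiv.Perm (Fin (m + 1)) → k)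
    (h : ∀ μ : Fin (m + 1) → ℕ, (∀ i, 0 < μ i) →
      ∑ σ : Equiv.Perm (Fin (m + 1)), α σ * Qfin (fun i => (μ (σ i) : k)) = 0) :
    ∀ μ : Fin (m + 1) → ℕ, (∀ i, 0 < μ i) →
      ∑ σ ∈ Finset.univ.filter
          (fun σ : Equiv.Perm (Fin (m + 1)) => σ (Fin.last m) = Fin.last m),
        α σ * Qfin (fun i : Fin m => (μ (σ i.castSucc) : k)) = 0 := by
  intro μ hμ
  classical
  have hGz := Stmt6.GP_zero k m hm α h μ hμ
  have h0 : ∑ σ ∈ Finset.univ.filter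
      (fun σ : Equiv.Perm (Fin (m + 1)) => σ (Fin.last m) = Fin.last m),
      α σ * ∏ τ ∈ Finset.univ.erase σ, (Stmt6.AP k m μ τ).eval 0
      = (Stmt6.GP k m α μ).eval 0 := by
    simp only [Stmt6.GP, Polynomial.eval_finset_sum, Polynomial.eval_mul,
      Polynomial.eval_pow, Polynomial.eval_C, Polynomial.eval_X, Polynomial.eval_prod]
    rw [Finset.sum_filter]
    refine Finset.sum_congr rfl fun σ _ => ?_
    by_cases hfix : σ (Fin.last m) = Fin.last m
    · rw [if_pos hfix, if_pos hfix, pow_zero, mul_one]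
    · rw [if_neg hfix, if_neg hfix, pow_one, mul_zero, zero_mul]
  rw [hGz, Polynomial.eval_zero] at h0
  have hmul : (∑ σ ∈ Finset.univ.filter
      (fun σ : Equiv.Perm (Fin (m + 1)) => σ (Fin.last m) = Fin.last m),
        α σ * Qfin (fun i : Fin m => (μ (σ i.castSucc) : k))) *
      (∏ τ : Equiv.Perm (Fin (m+1)), (Stmt6.AP k m μ τ).eval 0) = 0 := by
    rw [Finset.sum_mul]
    refine Eq.trans (Finset.sum_congr rfl fun σ hσ => ?_) h0
    rw [Finset.mem_filter] at hσ
    rw [Stmt6.Qfin_AP k m hm μ hμ σ hσ.2,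
      ← Finset.mul_prod_erase Finset.univ _ (Finset.mem_univ σ)]
    have hcan := inv_mul_cancel₀ (Stmt6.eval_AP_zero_ne k m μ σ)
    linear_combination (α σ * ∏ τ ∈ Finset.univ.erase σ, (Stmt6.AP k m μ τ).eval 0) * hcan
  have hne : (∏ τ : Equiv.Perm (Fin (m+1)), (Stmt6.AP k m μ τ).eval 0) ≠ 0 :=
    Finset.prod_ne_zero_iff.mpr fun τ _ => Stmt6.eval_AP_zero_ne k m μ τ
  exact (mul_eq_zero.mp hmul).resolve_right hne
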